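/- arXiv:2509.25153 — 2 statements merged into one kernel-verified Lean document; each statement's English description precedes it below -/
import Mathlib

section
/- Let u be a real, integrable random variable and b ∈ ℝ. Set ū = max(u, -b). Then E[Φ(-u - b)] ≥ Φ(-E[ū] - b), where Φ is the standard normal CDF. -/
open MeasureTheory

noncomputable def stdNormalCDF (x : ℝ) : ℝ :=
  ∫ u in Set.Iic x, (Real.sqrt (2 * Real.pi))⁻¹ * Real.exp (-u ^ 2 / 2)

namespace StdNormalAux

noncomputable def pdf (x : ℝ) : ℝ := (Real.sqrt (2 * Real.pi))⁻¹ * Real.exp (-x ^ 2 / 2)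

lemma pdf_nonneg (x : ℝ) : 0 ≤ pdf x :=
  mul_nonneg (inv_nonneg.2 (Real.sqrt_nonneg _)) (Real.exp_nonneg _)

lemma pdf_continuous : Continuous pdf :=
  continuous_const.mul ((continuous_pow 2 |>.neg.div_const 2).rexp)

lemma pdf_integrable : Integrable pdf := by
  have h : Integrable (fun x : ℝ => (Real.sqrt (2 * Real.pi))⁻¹ * Real.exp (-(2⁻¹) * x ^ 2)) :=
    (integrable_exp_neg_mul_sq (by norm_num : (0:ℝ) < 2⁻¹)).const_mul _
  refine h.congr (Filter.Eventually.of_forall fun x => ?_)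
  unfold pdf; ring_nf

lemma cdf_eq (x : ℝ) : stdNormalCDF x = stdNormalCDF 0 + ∫ t in (0:ℝ)..x, pdf t := by
  have := intervalIntegral.integral_Iic_sub_Iic (pdf_integrable.integrableOn (s := Set.Iic 0))
    (pdf_integrable.integrableOn (s := Set.Iic x)) (μ := volume)
  simp only [stdNormalCDF, pdf] at this ⊢
  linarith

lemma cdf_hasDerivAt (x : ℝ) : HasDerivAt stdNormalCDF (pdf x) x := by
  have h : HasDerivAt (fun y => stdNormalCDF 0 + ∫ t in (0:ℝ)..y, pdf t) (pdf x) x := by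
    have hftc : HasDerivAt (fun y => ∫ t in (0:ℝ)..y, pdf t) (pdf x) x :=
      intervalIntegral.integral_hasDerivAt_right
        pdf_integrable.intervalIntegrable
        (pdf_continuous.stronglyMeasurableAtFilter _ _)
        pdf_continuous.continuousAt
    exact hftc.const_add (stdNormalCDF 0)
  exact h.congr_of_eventuallyEq (Filter.Eventually.of_forall fun y => (cdf_eq y))

lemma cdf_continuous : Continuous stdNormalCDF :=
  continuous_iff_continuousAt.2 fun x => (cdf_hasDerivAt x).continuousAt

lemma cdf_nonneg (x : ℝ) : 0 ≤ stdNormalCDF x :=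
  setIntegral_nonneg measurableSet_Iic fun t _ => pdf_nonneg t

lemma cdf_le (x : ℝ) : stdNormalCDF x ≤ ∫ t, pdf t :=
  setIntegral_le_integral pdf_integrable (Filter.Eventually.of_forall fun t => pdf_nonneg t)

lemma cdf_mono : Monotone stdNormalCDF := fun x y hxy =>
  setIntegral_mono_set pdf_integrable.integrableOn
    (Filter.Eventually.of_forall fun t => pdf_nonneg t)
    (HasSubset.Subset.eventuallyLE (Set.Iic_subset_Iic.2 hxy))

lemma pdf_mono_nonpos {s t : ℝ} (hst : s ≤ t) (ht : t ≤ 0) : pdf s ≤ pdf t := by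
  have hsq : t ^ 2 ≤ s ^ 2 := by nlinarith
  exact mul_le_mul_of_nonneg_left
    (Real.exp_le_exp.2 (by linarith)) (inv_nonneg.2 (Real.sqrt_nonneg _))

end StdNormalAux

/-- For an integrable real random variable `u` and `b ∈ ℝ`, with `ū = max(u, -b)`,
one has `E[Φ(-u-b)] ≥ Φ(-E[ū]-b)`. -/
theorem stmt_5 {Ω : Type*} [MeasurableSpace Ω] (μ : Measure Ω) [IsProbabilityMeasure μ]
    (u : Ω → ℝ) (hu : Integrable u μ) (b : ℝ) :
    stdNormalCDF (-(∫ ω, max (u ω) (-b) ∂μ) - b) ≤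
      ∫ ω, stdNormalCDF (-(u ω) - b) ∂μ := by
  open StdNormalAux in
  set g : ℝ → ℝ := fun x => stdNormalCDF (-x - b) with hg
  have hgcont : Continuous g := cdf_continuous.comp (by continuity)
  -- derivative of g
  have hgderiv : ∀ x : ℝ, HasDerivAt g (-(pdf (-x - b))) x := by
    intro x
    have hinner : HasDerivAt (fun x : ℝ => -x - b) (-1) x :=
      ((hasDerivAt_id x).neg).sub_const b
    have := (cdf_hasDerivAt (-x - b)).comp x hinner
    have h2 : pdf (-x - b) * -1 = -(pdf (-x - b)) := by ring
    rw [h2] at this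
    exact this
  -- g is convex on Ici (-b)
  have hconv : ConvexOn ℝ (Set.Ici (-b)) g := by
    refine MonotoneOn.convexOn_of_deriv (convex_Ici _) hgcont.continuousOn
      (fun x _ => (hgderiv x).differentiableAt.differentiableWithinAt) ?_
    rw [interior_Ici]
    intro x hx y hy hxy
    rw [(hgderiv x).deriv, (hgderiv y).deriv]
    have : pdf (-y - b) ≤ pdf (-x - b) :=
      pdf_mono_nonpos (by linarith) (by simp at hx; linarith)
    linarith
  -- g is antitone
  have hganti : ∀ x y : ℝ, x ≤ y → g y ≤ g x := fun x y hxy =>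
    cdf_mono (by linarith)
  -- boundedness of g
  have hgbd : ∀ x : ℝ, ‖g x‖ ≤ ∫ t, StdNormalAux.pdf t := fun x => by
    rw [Real.norm_eq_abs, abs_of_nonneg (cdf_nonneg _)]
    exact cdf_le _
  -- integrability of g ∘ (any a.e.-measurable function)
  have hint : ∀ (f : Ω → ℝ), AEMeasurable f μ → Integrable (fun ω => g (f ω)) μ := by
    intro f hf
    refine ⟨(hgcont.measurable.comp_aemeasurable hf).aestronglyMeasurable, ?_⟩
    exact HasFiniteIntegral.of_bounded (C := ∫ t, StdNormalAux.pdf t)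
      (Filter.Eventually.of_forall fun ω => hgbd (f ω))
  set ub : Ω → ℝ := fun ω => max (u ω) (-b) with hub
  have hub_int : Integrable ub μ := by
    have := hu.sup (integrable_const (-b) : Integrable (fun _ : Ω => (-b)) μ)
    simpa [hub, Pi.sup_def] using this
  have hub_meas : AEMeasurable ub μ := hub_int.aemeasurable
  have hjensen : g (∫ ω, ub ω ∂μ) ≤ ∫ ω, g (ub ω) ∂μ := by
    refine hconv.map_integral_le hgcont.continuousOn isClosed_Ici
      (Filter.Eventually.of_forall fun ω => Set.mem_Ici.2 (le_max_right _ _)) hub_int ?_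
    exact hint ub hub_meas
  have hmono : ∫ ω, g (ub ω) ∂μ ≤ ∫ ω, g (u ω) ∂μ := by
    refine integral_mono (hint ub hub_meas) (hint u hu.aemeasurable) fun ω => ?_
    exact hganti _ _ (le_max_left _ _)
  exact le_trans hjensen hmono
end

section
/- Let φ: ℝ → ℝ⁺ be continuous, non-decreasing, with lim_{x→-∞} φ(x) = 0, lim_{x→∞} φ(x) = 1, and φ(0) > 0. Let g ~ N(0,1) and define f(β) = Var(g·φ(βg)) for β ≥ 0. Then inf_{β ≥ 0} f(β) > 0. -/
open MeasureTheory ProbabilityTheory Filter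

lemma integrable_sq_gaussian : Integrable (fun x : ℝ => x ^ 2) (gaussianReal 0 1) := by
  rw [gaussianReal_of_var_ne_zero 0 one_ne_zero,
    integrable_withDensity_iff (measurable_gaussianPDF 0 1)
      (Eventually.of_forall fun x => ENNReal.ofReal_lt_top)]
  have h : Integrable (fun x : ℝ => x ^ (2 : ℝ) * Real.exp (-(1/2) * x ^ 2)) :=
    integrable_rpow_mul_exp_neg_mul_sq (by norm_num : (0:ℝ) < 1/2) (by norm_num : (-1:ℝ) < 2)
  have h2 := (h.const_mul ((Real.sqrt (2 * Real.pi * (1:NNReal)))⁻¹))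
  refine h2.congr (Eventually.of_forall fun x => ?_)
  have hx2 : (x : ℝ) ^ (2:ℝ) = x ^ 2 := by
    rw [show ((2:ℝ)) = ((2:ℕ):ℝ) by norm_num, Real.rpow_natCast]
  simp only [gaussianPDF]
  rw [ENNReal.toReal_ofReal (gaussianPDFReal_nonneg 0 1 x)]
  simp only [gaussianPDFReal]
  rw [hx2]
  push_cast
  ring_nf

lemma memLp_id_gaussian : MemLp (fun x : ℝ => x) 2 (gaussianReal 0 1) := by
  refine (memLp_two_iff_integrable_sq ?_).2 integrable_sq_gaussian
  exact continuous_id.aestronglyMeasurable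

/-- For a continuous non-decreasing `φ : ℝ → ℝ⁺` with `φ(-∞) = 0`, `φ(∞) = 1`, `φ(0) > 0`,
and `g ~ N(0,1)`, the variance `f(β) = Var(g·φ(βg))` is bounded away from zero over `β ≥ 0`. -/
theorem stmt_17 (φ : ℝ → ℝ) (hcont : Continuous φ) (hmono : Monotone φ)
    (hnn : ∀ x, 0 ≤ φ x) (h0 : 0 < φ 0)
    (hbot : Tendsto φ atBot (nhds 0)) (htop : Tendsto φ atTop (nhds 1)) :
    0 < ⨅ β : {b : ℝ // 0 ≤ b},
        variance (fun x : ℝ => x * φ ((β : ℝ) * x)) (gaussianReal 0 1) := by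
  set μ : Measure ℝ := gaussianReal 0 1 with hμ
  set a : ℝ := φ 0 with ha
  -- φ ≤ 1
  have hφle1 : ∀ x, φ x ≤ 1 := fun x => hmono.ge_of_tendsto htop x
  -- positivity of Gaussian measure on positive-volume sets
  have habs : (volume : Measure ℝ) ≪ μ := gaussianReal_absolutelyContinuous' 0 one_ne_zero
  have hpos : ∀ s : Set ℝ, volume s ≠ 0 → 0 < (μ s).toReal := by
    intro s hs
    refine ENNReal.toReal_pos (fun h => hs (habs h)) (measure_ne_top μ s)
  have hp : 0 < (μ (Set.Ici (1:ℝ))).toReal := by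
    refine hpos _ ?_
    simp [Real.volume_Ici]
  have hq : 0 < (μ (Set.Iic (0:ℝ))).toReal := by
    refine hpos _ ?_
    simp [Real.volume_Iic]
  set p : ℝ := (μ (Set.Ici (1:ℝ))).toReal with hpdef
  set q : ℝ := (μ (Set.Iic (0:ℝ))).toReal with hqdef
  set K : ℝ := (a/2)^2 * min p q with hK
  have hKpos : 0 < K := by
    apply mul_pos (pow_pos (by positivity) 2) (lt_min hp hq)
  refine lt_of_lt_of_le hKpos (le_ciInf ?_)
  rintro ⟨β, hβ⟩
  set X : ℝ → ℝ := fun x => x * φ (β * x) with hX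
  -- Memℒp
  have hXcont : Continuous X := continuous_id.mul (hcont.comp (continuous_const.mul continuous_id))
  have hXm : MemLp X 2 μ := by
    refine memLp_id_gaussian.of_le hXcont.aestronglyMeasurable
      (Eventually.of_forall fun x => ?_)
    simp only [hX, Real.norm_eq_abs, abs_mul]
    calc |x| * |φ (β * x)| ≤ |x| * 1 := by
          refine mul_le_mul_of_nonneg_left ?_ (abs_nonneg x)
          rw [abs_of_nonneg (hnn _)]; exact hφle1 _
      _ = |x| := mul_one _
  -- key lower bound for any center c
  have key : ∀ c : ℝ, K ≤ ∫ x, (X x - c)^2 ∂μ := by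
    intro c
    have hint : Integrable (fun x => (X x - c)^2) μ := by
      have := (hXm.sub (memLp_const c)).integrable_sq
      simpa using this
    have hnn2 : 0 ≤ᵐ[μ] fun x => (X x - c)^2 :=
      Eventually.of_forall fun x => sq_nonneg _
    rcases le_or_gt c (a/2) with hc | hc
    · -- use the set Ici 1, where X ≥ a
      have hXge : ∀ x ∈ Set.Ici (1:ℝ), a ≤ X x := by
        intro x hx
        have hx1 : (1:ℝ) ≤ x := hx
        have hφ : a ≤ φ (β * x) := hmono (by positivity : (0:ℝ) ≤ β * x)
        calc a ≤ φ (β * x) := hφ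
          _ = 1 * φ (β * x) := (one_mul _).symm
          _ ≤ x * φ (β * x) := by
              exact mul_le_mul_of_nonneg_right hx1 (hnn _)
      have hsq : ∀ x ∈ Set.Ici (1:ℝ), (a/2)^2 ≤ (X x - c)^2 := by
        intro x hx
        have h1 : a/2 ≤ X x - c := by
          have := hXge x hx; linarith
        exact pow_le_pow_left₀ (by positivity) h1 2
      calc K ≤ (a/2)^2 * p := by
            apply mul_le_mul_of_nonneg_left (min_le_left _ _) (sq_nonneg _)
        _ = ∫ _ in Set.Ici (1:ℝ), (a/2)^2 ∂μ := by
            rw [setIntegral_const, smul_eq_mul, mul_comm]; rfl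
        _ ≤ ∫ x in Set.Ici (1:ℝ), (X x - c)^2 ∂μ := by
            refine setIntegral_mono_on (integrableOn_const (measure_ne_top _ _))
              hint.integrableOn measurableSet_Ici hsq
        _ ≤ ∫ x, (X x - c)^2 ∂μ := setIntegral_le_integral hint hnn2
    · -- use the set Iic 0, where X ≤ 0
      have hXle : ∀ x ∈ Set.Iic (0:ℝ), X x ≤ 0 := by
        intro x hx
        exact mul_nonpos_of_nonpos_of_nonneg hx (hnn _)
      have hsq : ∀ x ∈ Set.Iic (0:ℝ), (a/2)^2 ≤ (X x - c)^2 := by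
        intro x hx
        have h1 : X x ≤ 0 := hXle x hx
        have h2 : a/2 ≤ c - X x := by linarith
        have h3 : (X x - c)^2 = (c - X x)^2 := by ring
        rw [h3]
        exact pow_le_pow_left₀ (by positivity) h2 2
      calc K ≤ (a/2)^2 * q := by
            apply mul_le_mul_of_nonneg_left (min_le_right _ _) (sq_nonneg _)
        _ = ∫ _ in Set.Iic (0:ℝ), (a/2)^2 ∂μ := by
            rw [setIntegral_const, smul_eq_mul, mul_comm]; rfl
        _ ≤ ∫ x in Set.Iic (0:ℝ), (X x - c)^2 ∂μ := by
            refine setIntegral_mono_on (integrableOn_const (measure_ne_top _ _))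
              hint.integrableOn measurableSet_Iic hsq
        _ ≤ ∫ x, (X x - c)^2 ∂μ := setIntegral_le_integral hint hnn2
  have hvar : variance X μ = ∫ x, (X x - ∫ y, X y ∂μ)^2 ∂μ := by
    rw [variance_eq_integral hXm.aemeasurable]
  rw [hvar]
  exact key _
end
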